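/- For every k ≥ 1, every subset S ⊆ {1,…,k}, and every x ∈ B_k, one has Σ_{S,k}(Φ_k(x)) = Φ_k(Θ_S(x)). -/

import Mathlib

open MvPolynomial
set_option synthInstance.maxHeartbeats 400000
set_option maxHeartbeats 1000000
noncomputable def relIdeal (p r k : ℕ) [Fact p.Prime] : Ideal (MvPolynomial (Fin k) (GaloisField p r)) :=
  Ideal.span (Set.range fun i : Fin k => X i ^ 2 - X i)
abbrev B (p r k : ℕ) [Fact p.Prime] :=
  MvPolynomial (Fin k) (GaloisField p r) ⧸ relIdeal p r k
noncomputable def v (p r k : ℕ) [Fact p.Prime] (i : Fin k) : B p r k :=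
  Ideal.Quotient.mk _ (X i)
lemma v_idem (p r k : ℕ) [Fact p.Prime] (i : Fin k) : v p r k i ^ 2 = v p r k i := by
  have h : (X i ^ 2 - X i : MvPolynomial (Fin k) (GaloisField p r)) ∈ relIdeal p r k :=
    Ideal.subset_span ⟨i, rfl⟩
  have h2 := (Ideal.Quotient.eq_zero_iff_mem).mpr h
  rw [map_sub, map_pow] at h2
  have h3 := sub_eq_zero.mp h2
  simpa [v] using h3
lemma one_sub_v_idem (p r k : ℕ) [Fact p.Prime] (i : Fin k) :
    (1 - v p r k i) ^ 2 = 1 - v p r k i := by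
  have h : (1 - v p r k i) ^ 2 = 1 - 2 * v p r k i + v p r k i ^ 2 := by ring
  rw [h, v_idem]; ring
noncomputable def ThAux (p r k : ℕ) [Fact p.Prime] (S : Finset (Fin k)) :
    MvPolynomial (Fin k) (GaloisField p r) →+* B p r k :=
  (aeval (fun i : Fin k => if i ∈ S then 1 - v p r k i else v p r k i)).toRingHom
lemma ThAux_cond (p r k : ℕ) [Fact p.Prime] (S : Finset (Fin k)) :
    relIdeal p r k ≤ RingHom.ker (ThAux p r k S) := by
  refine Ideal.span_le.mpr ?_
  rintro _ ⟨i, rfl⟩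
  simp only [SetLike.mem_coe, RingHom.mem_ker, ThAux, AlgHom.toRingHom_eq_coe,
    RingHom.coe_coe, map_sub, map_pow, aeval_X]
  by_cases h : i ∈ S
  · rw [if_pos h, one_sub_v_idem, sub_self]
  · rw [if_neg h, v_idem, sub_self]
/-- The automorphism `Θ_S` of `B_k`, determined by `v_i ↦ 1 - v_i` for `i ∈ S` and
`v_i ↦ v_i` otherwise, fixing `F_{p^r}` pointwise. -/
noncomputable def Th (p r k : ℕ) [Fact p.Prime] (S : Finset (Fin k)) :
    B p r k →+* B p r k :=
  Ideal.Quotient.lift (relIdeal p r k) (ThAux p r k S) (fun _ ha => ThAux_cond p r k S ha)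
noncomputable def LamAux (p r k : ℕ) [Fact p.Prime] (π : Equiv.Perm (Fin k)) (t : ℕ) :
    MvPolynomial (Fin k) (GaloisField p r) →+* B p r k :=
  eval₂Hom ((Ideal.Quotient.mk (relIdeal p r k)).comp
      ((C : GaloisField p r →+* MvPolynomial (Fin k) (GaloisField p r)).comp
        (iterateFrobenius (GaloisField p r) p t)))
    (fun i => v p r k (π i))
lemma LamAux_cond (p r k : ℕ) [Fact p.Prime] (π : Equiv.Perm (Fin k)) (t : ℕ) :
    relIdeal p r k ≤ RingHom.ker (LamAux p r k π t) := by
  refine Ideal.span_le.mpr ?_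
  rintro _ ⟨i, rfl⟩
  simp only [SetLike.mem_coe, RingHom.mem_ker, LamAux, map_sub, map_pow, eval₂Hom_X']
  rw [v_idem, sub_self]
/-- The automorphism `Λ_{π,t}` of `B_k`, acting on `F_{p^r}` as the Frobenius power
`α ↦ α^{p^t}` and sending `v_i ↦ v_{π(i)}`. -/
noncomputable def Lam (p r k : ℕ) [Fact p.Prime] (π : Equiv.Perm (Fin k)) (t : ℕ) :
    B p r k →+* B p r k :=
  Ideal.Quotient.lift (relIdeal p r k) (LamAux p r k π t) (fun _ ha => LamAux_cond p r k π t ha)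
noncomputable def PhiAux (p r k : ℕ) [Fact p.Prime] :
    MvPolynomial (Fin k) (GaloisField p r) →+* (Fin (2 ^ k) → GaloisField p r) :=
  Pi.ringHom fun j =>
    eval₂Hom (RingHom.id (GaloisField p r))
      (fun i : Fin k => if Nat.testBit (j : ℕ) (i : ℕ) then 1 else 0)
lemma PhiAux_cond (p r k : ℕ) [Fact p.Prime] :
    relIdeal p r k ≤ RingHom.ker (PhiAux p r k) := by
  refine Ideal.span_le.mpr ?_
  rintro _ ⟨i, rfl⟩
  simp only [SetLike.mem_coe, RingHom.mem_ker, PhiAux]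
  funext j
  simp only [Pi.ringHom, RingHom.pi_apply, Pi.ringHom_apply, map_sub, map_pow, eval₂Hom_X']
  by_cases h : Nat.testBit (j : ℕ) (i : ℕ) <;> simp [h]
/-- The Gray map `Φ_k : B_k → F_{p^r}^{2^k}`: the coordinate indexed by `j` is the
evaluation of (a representative of) an element of `B_k` at the point whose `i`-th
coordinate is the `i`-th binary digit of `j`.  This agrees with the recursive
definition `Φ_k(α + β v_k) = (Φ_{k-1}(α), Φ_{k-1}(α + β))`, `Φ_0 = id`. -/
noncomputable def Phi (p r k : ℕ) [Fact p.Prime] :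
    B p r k →+* (Fin (2 ^ k) → GaloisField p r) :=
  Ideal.Quotient.lift (relIdeal p r k) (PhiAux p r k) (fun _ ha => PhiAux_cond p r k ha)
lemma sum_two_pow_lt (k : ℕ) (S : Finset (Fin k)) : (∑ i ∈ S, 2 ^ (i : ℕ)) < 2 ^ k := by
  have h1 : (∑ i ∈ S, 2 ^ (i : ℕ)) ≤ ∑ i ∈ (Finset.univ : Finset (Fin k)), 2 ^ (i : ℕ) :=
    Finset.sum_le_sum_of_subset (Finset.subset_univ S)
  have h2 : ∑ i ∈ (Finset.univ : Finset (Fin k)), 2 ^ (i : ℕ) =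
      ∑ i ∈ Finset.range k, 2 ^ i := Fin.sum_univ_eq_sum_range _ _
  have h3 : ∀ n : ℕ, (∑ i ∈ Finset.range n, 2 ^ i) < 2 ^ n := by
    intro n
    induction n with
    | zero => simp
    | succ m ih => rw [Finset.sum_range_succ, pow_succ]; omega
  have h4 := h3 k
  omega
/-- The permutation `Σ_{S,k}` of `{1,…,2^k}` : on 0-based indices it is
`j ↦ j XOR (Σ_{i ∈ S} 2^{i-1})`, i.e. the composition over `i ∈ S` of the permutations
`Σ_{i,k}` which, within each consecutive block of `2^i` coordinates, cyclically shift the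
block by `2^{i-1}` positions (flip the binary digit `i-1`). -/
def SigmaPerm (k : ℕ) (S : Finset (Fin k)) : Equiv.Perm (Fin (2 ^ k)) :=
  Function.Involutive.toPerm
    (fun j => ⟨(j : ℕ) ^^^ ∑ i ∈ S, 2 ^ (i : ℕ),
      Nat.xor_lt_two_pow j.isLt (sum_two_pow_lt k S)⟩)
    (by
      intro j
      apply Fin.ext
      simp [Nat.xor_assoc])
lemma testBit_sum_S (k : ℕ) (S : Finset (Fin k)) (n : ℕ) :
    Nat.testBit (∑ i ∈ S, 2 ^ (i : ℕ)) n = decide (∃ i ∈ S, (i : ℕ) = n) := by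
  induction S using Finset.induction_on_max with
  | empty => simp
  | insert a S ha ih =>
    have haS : a ∉ S := fun h => lt_irrefl a (ha a h)
    have hbound : (∑ i ∈ S, 2 ^ (i : ℕ)) < 2 ^ (a : ℕ) := by
      have h0 : ∑ i ∈ S, 2 ^ (i : ℕ) = ∑ j ∈ S.image Fin.val, 2 ^ j :=
        (Finset.sum_image (fun x _ y _ h => Fin.val_injective h)).symm
      have h1 : ∑ j ∈ S.image Fin.val, 2 ^ j ≤ ∑ j ∈ Finset.range (a : ℕ), 2 ^ j := by
        apply Finset.sum_le_sum_of_subset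
        intro j hj
        simp only [Finset.mem_image] at hj
        obtain ⟨i, hi, rfl⟩ := hj
        exact Finset.mem_range.mpr (ha i hi)
      have h2 : ∀ n : ℕ, (∑ i ∈ Finset.range n, 2 ^ i) < 2 ^ n := by
        intro n
        induction n with
        | zero => simp
        | succ m ih => rw [Finset.sum_range_succ, pow_succ]; omega
      have h3 := h2 (a : ℕ)
      omega
    rw [Finset.sum_insert haS]
    have h1 : 2 ^ (a : ℕ) + ∑ i ∈ S, 2 ^ (i : ℕ)
        = 2 ^ (a : ℕ) ||| ∑ i ∈ S, 2 ^ (i : ℕ) := by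
      have := Nat.two_pow_add_eq_or_of_lt hbound 1
      simpa using this
    rw [h1, Nat.testBit_or, ih, Nat.testBit_two_pow]
    by_cases h : (a : ℕ) = n
    · have hx : ∃ i ∈ insert a S, (i : ℕ) = n := ⟨a, Finset.mem_insert_self a S, h⟩
      simp [h, hx]
    · have he : (∃ i ∈ insert a S, (i : ℕ) = n) ↔ (∃ i ∈ S, (i : ℕ) = n) := by
        constructor
        · rintro ⟨i, hi, rfl⟩
          rcases Finset.mem_insert.mp hi with rfl | hi'
          · exact absurd rfl h
          · exact ⟨i, hi', rfl⟩
        · rintro ⟨i, hi, rfl⟩; exact ⟨i, Finset.mem_insert_of_mem hi, rfl⟩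
      simp [h, he]
lemma phi_v (p r k : ℕ) [Fact p.Prime] (i : Fin k) (j : Fin (2 ^ k)) :
    Phi p r k (v p r k i) j = if Nat.testBit (j : ℕ) (i : ℕ) then 1 else 0 := by
  simp [Phi, v, PhiAux, Pi.ringHom, RingHom.pi_apply, Ideal.Quotient.lift_mk]
/-- For every `k ≥ 1`, `S ⊆ {1,…,k}` and `x ∈ B_k`, `Σ_{S,k}(Φ_k(x)) = Φ_k(Θ_S(x))`. -/
theorem stmt_12 (p r k : ℕ) [Fact p.Prime] (hr : 1 ≤ r) (hk : 1 ≤ k)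
    (S : Finset (Fin k)) (x : B p r k) :
    (fun j : Fin (2 ^ k) => Phi p r k x (SigmaPerm k S j)) =
      Phi p r k (Th p r k S x) := by
  obtain ⟨f, rfl⟩ := Ideal.Quotient.mk_surjective x
  funext j
  rw [show Th p r k S (Ideal.Quotient.mk _ f) = ThAux p r k S f from
    Ideal.Quotient.lift_mk _ _ _]
  rw [show Phi p r k (Ideal.Quotient.mk _ f) = PhiAux p r k f from
    Ideal.Quotient.lift_mk _ _ _]
  induction f using MvPolynomial.induction_on with
  | C a =>
      have hmk : (algebraMap (GaloisField p r) (B p r k)) a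
          = Ideal.Quotient.mk (relIdeal p r k) (C a) := rfl
      simp [PhiAux, Pi.ringHom, RingHom.pi_apply, ThAux, hmk, Phi, Ideal.Quotient.lift_mk]
  | add f g ihf ihg =>
      simp only [map_add, Pi.add_apply, ihf, ihg]
  | mul_X f i ihf =>
      simp only [map_mul, Pi.mul_apply, ihf]
      congr 1
      have hval : ((SigmaPerm k S j : Fin (2 ^ k)) : ℕ)
          = (j : ℕ) ^^^ ∑ i ∈ S, 2 ^ (i : ℕ) := rfl
      have hbit : Nat.testBit ((SigmaPerm k S j : Fin (2 ^ k)) : ℕ) (i : ℕ)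
          = ((Nat.testBit (j : ℕ) (i : ℕ)) != decide (i ∈ S)) := by
        rw [hval, Nat.testBit_xor, testBit_sum_S]
        congr 1
        simp only [decide_eq_decide]
        constructor
        · rintro ⟨i', hi', h⟩; rwa [Fin.val_injective h] at hi'
        · intro h; exact ⟨i, h, rfl⟩
      have hTX : ThAux p r k S (X i) = if i ∈ S then 1 - v p r k i else v p r k i := by
        simp [ThAux]
      have hPX : PhiAux p r k (X i) (SigmaPerm k S j)
          = if Nat.testBit ((SigmaPerm k S j : Fin (2 ^ k)) : ℕ) (i : ℕ) then 1 else 0 := by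
        simp [PhiAux, Pi.ringHom, RingHom.pi_apply]
      rw [hPX, hTX, hbit]
      by_cases hiS : i ∈ S <;> by_cases hb : Nat.testBit (j : ℕ) (i : ℕ) <;>
        simp only [hiS, hb, if_true, if_false, decide_true, decide_false, ite_true,
          ite_false, map_sub, map_one, Pi.sub_apply, Pi.one_apply, phi_v,
          Bool.bne_true, Bool.bne_false, Bool.not_true, Bool.not_false] <;>
        norm_num
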